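/- Let AV = VH + re_mᵀ with V ∈ ℝ^{n×m} Ω-orthonormal and r Ω-orthogonal to V, and let Q ∈ ℝ^{m×m} be orthogonal. Write H⁺ = QᵀHQ and V⁺ = VQ. Then for any k < m, the truncated factorization A V⁺(:,1:k) = V⁺(:,1:k) H⁺(1:k,1:k) + r̃ e_kᵀ holds with r̃ = H⁺(k+1,k)·V⁺(:,k+1) + Q(m,k)·r, provided H⁺ is upper Hessenberg and e_mᵀQ has zeros in its first k-1 entries; moreover V⁺(:,1:k) is Ω-orthonormal and r̃ is Ω-orthogonal to V⁺(:,1:k). -/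
import Mathlib

open Matrix

theorem stmt15 {n M K d : ℕ} (hKM : K + 1 < M + 1)
    (A : Matrix (Fin n) (Fin n) ℝ) (Ω : Matrix (Fin d) (Fin n) ℝ)
    (V : Matrix (Fin n) (Fin (M + 1)) ℝ) (H Q : Matrix (Fin (M + 1)) (Fin (M + 1)) ℝ)
    (r : Fin n → ℝ)
    (hVorth : (Ω * V)ᵀ * (Ω * V) = 1)
    (hrorth : (Ω * V)ᵀ.mulVec (Ω.mulVec r) = 0)
    (hfact : A * V = V * H + Matrix.vecMulVec r (Pi.single (Fin.last M) 1))
    (hQ : Qᵀ * Q = 1)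
    (hHplusHess : ∀ i j : Fin (M + 1), (j : ℕ) + 1 < (i : ℕ) → (Qᵀ * H * Q) i j = 0)
    (hQrow : ∀ j : Fin (M + 1), (j : ℕ) < K → Q (Fin.last M) j = 0) :
    let Vp : Matrix (Fin n) (Fin (K + 1)) ℝ :=
      (V * Q).submatrix id (Fin.castLE (by omega))
    let Hp : Matrix (Fin (K + 1)) (Fin (K + 1)) ℝ :=
      (Qᵀ * H * Q).submatrix (Fin.castLE (by omega)) (Fin.castLE (by omega))
    let rt : Fin n → ℝ := fun i =>
      (Qᵀ * H * Q) ⟨K + 1, hKM⟩ ⟨K, by omega⟩ * (V * Q) i ⟨K + 1, hKM⟩ +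
        Q (Fin.last M) ⟨K, by omega⟩ * r i
    A * Vp = Vp * Hp + Matrix.vecMulVec rt (Pi.single (Fin.last K) 1) ∧
    (Ω * Vp)ᵀ * (Ω * Vp) = 1 ∧
    (Ω * Vp)ᵀ.mulVec (Ω.mulVec rt) = 0 := by
  intro Vp Hp rt
  have hK1 : K + 1 ≤ M + 1 := by omega
  have hK2 : K + 2 ≤ M + 1 := by omega
  have hQQ' : Q * Qᵀ = 1 := by rwa [mul_eq_one_comm] at hQ
  set W := V * Q with hWdef
  set Hf := Qᵀ * H * Q with hHfdef
  -- full rotated factorization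
  have hAW : A * W = W * Hf + Matrix.vecMulVec r (fun j => Q (Fin.last M) j) := by
    rw [hWdef, hHfdef]
    have h1 : A * (V * Q) = (A * V) * Q := by rw [Matrix.mul_assoc]
    rw [h1, hfact, Matrix.add_mul]
    congr 1
    · calc V * H * Q = V * ((Q * Qᵀ) * (H * Q)) := by
            rw [hQQ', Matrix.one_mul, Matrix.mul_assoc]
      _ = (V * Q) * (Qᵀ * H * Q) := by
            simp only [← Matrix.mul_assoc]
    · ext i j
      simp [Matrix.vecMulVec_apply, Matrix.mul_apply, Pi.single_apply, mul_ite, ite_mul,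
        Finset.sum_ite_eq']
  -- rotated orthonormality
  have hWorth : (Ω * W)ᵀ * (Ω * W) = 1 := by
    rw [hWdef]
    have h1 : Ω * (V * Q) = (Ω * V) * Q := by rw [Matrix.mul_assoc]
    rw [h1, Matrix.transpose_mul]
    calc Qᵀ * (Ω * V)ᵀ * ((Ω * V) * Q) = Qᵀ * ((Ω * V)ᵀ * (Ω * V)) * Q := by
          simp only [Matrix.mul_assoc]
    _ = 1 := by rw [hVorth, Matrix.mul_one, hQ]
  -- rotated r-orthogonality
  have hWr : (Ω * W)ᵀ.mulVec (Ω.mulVec r) = 0 := by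
    rw [hWdef]
    have h1 : (Ω * (V * Q))ᵀ = Qᵀ * (Ω * V)ᵀ := by
      rw [← Matrix.mul_assoc, Matrix.transpose_mul]
    rw [h1, ← Matrix.mulVec_mulVec, hrorth, Matrix.mulVec_zero]
  -- sum splitting
  have hsplit : ∀ (jm : Fin (M + 1)), (jm : ℕ) ≤ K → ∀ i : Fin n,
      ∑ l : Fin (M + 1), W i l * Hf l jm
        = (∑ l : Fin (K + 1), W i (Fin.castLE hK1 l) * Hf (Fin.castLE hK1 l) jm)
          + W i ⟨K + 1, hKM⟩ * Hf ⟨K + 1, hKM⟩ jm := by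
    intro jm hjm i
    rw [← Finset.sum_subset
        (Finset.subset_univ (Finset.univ.map (Fin.castLEEmb hK2)))]
    · rw [Finset.sum_map, Fin.sum_univ_castSucc]
      rfl
    · intro l _ hl
      have hlv : ¬ (l : ℕ) < K + 2 := by
        intro hlt
        exact hl (Finset.mem_map.mpr ⟨⟨(l : ℕ), hlt⟩, Finset.mem_univ _, by
          simp [Fin.castLEEmb, Fin.ext_iff]⟩)
      rw [hHplusHess l jm (by omega), mul_zero]
  have hVp : Vp = W.submatrix id (Fin.castLE hK1) := rfl
  have hHp : Hp = Hf.submatrix (Fin.castLE hK1) (Fin.castLE hK1) := rfl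
  have hrt : rt = fun i =>
      Hf ⟨K + 1, hKM⟩ ⟨K, by omega⟩ * W i ⟨K + 1, hKM⟩
        + Q (Fin.last M) ⟨K, by omega⟩ * r i := rfl
  have hVpW : Ω * Vp = (Ω * W).submatrix id (Fin.castLE hK1) := by
    ext x a
    simp [hVp, Matrix.mul_apply]
  refine ⟨?_, ?_, ?_⟩
  · -- truncated factorization
    ext i j
    have hj : (j : ℕ) ≤ K := by omega
    have lhs_eq : (A * Vp) i j = (A * W) i (Fin.castLE hK1 j) := by
      simp [hVp, Matrix.mul_apply]
    have hAWij : (A * W) i (Fin.castLE hK1 j)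
        = (∑ l, W i l * Hf l (Fin.castLE hK1 j))
          + r i * Q (Fin.last M) (Fin.castLE hK1 j) := by
      rw [hAW]
      simp [Matrix.add_apply, Matrix.vecMulVec_apply, Matrix.mul_apply]
    have rhs1 : (Vp * Hp) i j
        = ∑ l : Fin (K + 1),
            W i (Fin.castLE hK1 l) * Hf (Fin.castLE hK1 l) (Fin.castLE hK1 j) := by
      simp [hVp, hHp, Matrix.mul_apply]
    have rhs_eq : (Vp * Hp + Matrix.vecMulVec rt (Pi.single (Fin.last K) 1)) i j
        = (∑ l : Fin (K + 1),
            W i (Fin.castLE hK1 l) * Hf (Fin.castLE hK1 l) (Fin.castLE hK1 j))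
          + rt i * (if j = Fin.last K then 1 else 0) := by
      rw [Matrix.add_apply, rhs1, Matrix.vecMulVec_apply, Pi.single_apply]
    rw [lhs_eq, hAWij, hsplit (Fin.castLE hK1 j) hj i, rhs_eq]
    by_cases hjK : j = Fin.last K
    · subst hjK
      have hcast : (Fin.castLE hK1 (Fin.last K)) = (⟨K, by omega⟩ : Fin (M + 1)) := rfl
      rw [hcast, hrt]
      simp only [eq_self_iff_true, if_true, mul_one]
      ring
    · have hjlt : (j : ℕ) < K := by
        have := Fin.val_lt_last hjK
        omega
      rw [hQrow (Fin.castLE hK1 j) (by simpa using hjlt)]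
      rw [hHplusHess ⟨K + 1, hKM⟩ (Fin.castLE hK1 j) (by simp; omega)]
      simp [hjK]
  · -- orthonormality
    rw [hVpW]
    ext a b
    have h1 : ((((Ω * W).submatrix id (Fin.castLE hK1))ᵀ
        * ((Ω * W).submatrix id (Fin.castLE hK1))) a b)
        = ((Ω * W)ᵀ * (Ω * W)) (Fin.castLE hK1 a) (Fin.castLE hK1 b) := by
      simp [Matrix.mul_apply]
    rw [h1, hWorth]
    by_cases hab : a = b
    · subst hab; rw [Matrix.one_apply_eq, Matrix.one_apply_eq]
    · have h2 : Fin.castLE hK1 a ≠ Fin.castLE hK1 b :=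
        fun h => hab (Fin.castLE_injective hK1 h)
      rw [Matrix.one_apply_ne h2, Matrix.one_apply_ne hab]
  · -- r-orthogonality
    funext a
    have key1 : ((Ω * W)ᵀ * (Ω * W)) (Fin.castLE hK1 a) (⟨K + 1, hKM⟩ : Fin (M + 1))
        = 0 := by
      rw [hWorth]
      have hne : Fin.castLE hK1 a ≠ (⟨K + 1, hKM⟩ : Fin (M + 1)) := by
        intro h
        have h' : (a : ℕ) = K + 1 := by simpa using congrArg Fin.val h
        omega
      simp [Matrix.one_apply, hne]
    have key2 : ((Ω * W)ᵀ.mulVec (Ω.mulVec r)) (Fin.castLE hK1 a) = 0 := by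
      rw [hWr]; rfl
    have hOrt : ∀ x, Ω.mulVec rt x
        = Hf ⟨K + 1, hKM⟩ ⟨K, by omega⟩ * (Ω * W) x ⟨K + 1, hKM⟩
          + Q (Fin.last M) ⟨K, by omega⟩ * (Ω.mulVec r) x := by
      intro x
      rw [hrt]
      simp only [Matrix.mulVec, dotProduct, Matrix.mul_apply]
      rw [Finset.mul_sum, Finset.mul_sum, ← Finset.sum_add_distrib]
      apply Finset.sum_congr rfl
      intro y _
      ring
    show ((Ω * Vp)ᵀ.mulVec (Ω.mulVec rt)) a = 0
    rw [hVpW]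
    have expand : (((Ω * W).submatrix id (Fin.castLE hK1))ᵀ.mulVec (Ω.mulVec rt)) a
        = ∑ x, (Ω * W) x (Fin.castLE hK1 a) * (Ω.mulVec rt) x := by
      simp [Matrix.mulVec, dotProduct]
    rw [expand]
    calc ∑ x, (Ω * W) x (Fin.castLE hK1 a) * (Ω.mulVec rt) x
        = ∑ x, (Ω * W) x (Fin.castLE hK1 a) *
            (Hf ⟨K + 1, hKM⟩ ⟨K, by omega⟩ * (Ω * W) x ⟨K + 1, hKM⟩
              + Q (Fin.last M) ⟨K, by omega⟩ * (Ω.mulVec r) x) := by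
          exact Finset.sum_congr rfl fun x _ => by rw [hOrt]
    _ = Hf ⟨K + 1, hKM⟩ ⟨K, by omega⟩ *
          (∑ x, (Ω * W) x (Fin.castLE hK1 a) * (Ω * W) x ⟨K + 1, hKM⟩)
        + Q (Fin.last M) ⟨K, by omega⟩ *
          (∑ x, (Ω * W) x (Fin.castLE hK1 a) * (Ω.mulVec r) x) := by
          rw [Finset.mul_sum, Finset.mul_sum, ← Finset.sum_add_distrib]
          exact Finset.sum_congr rfl fun x _ => by ring
    _ = 0 := by
          have e1 : (∑ x, (Ω * W) x (Fin.castLE hK1 a) * (Ω * W) x ⟨K + 1, hKM⟩)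
              = ((Ω * W)ᵀ * (Ω * W)) (Fin.castLE hK1 a) (⟨K + 1, hKM⟩ : Fin (M + 1)) := by
            simp [Matrix.mul_apply, Matrix.transpose_apply, mul_comm]
          have e2 : (∑ x, (Ω * W) x (Fin.castLE hK1 a) * (Ω.mulVec r) x)
              = ((Ω * W)ᵀ.mulVec (Ω.mulVec r)) (Fin.castLE hK1 a) := by
            simp [Matrix.mulVec, dotProduct]
          rw [e1, e2, key1, key2]
          ring
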